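/- For any odd positive integer n ≥ 3 and any natural number λ, the number of orbits of the dihedral group D_n (of order 2n) acting on the set of proper λ-colorings of the cycle Γ_n equals (1/(2n)) ∑_{d | n} φ(n/d)(λ−1)^d − λ/2 + 1/2. -/

import Mathlib

namespace Orbital10

variable {l : ℕ}

/-- Append equiv for proper paths. -/
def pathEquiv (l g : ℕ) :
    {a : Fin (g+2) → Fin l // ∀ i : Fin (g+1), a i.succ ≠ a i.castSucc} ≃
    Σ b : {a : Fin (g+1) → Fin l // ∀ i : Fin g, a i.succ ≠ a i.castSucc},
      {x : Fin l // x ≠ b.1 (Fin.last g)} where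
  toFun a := ⟨⟨Fin.init a.1, fun j => by
      have h := a.2 j.castSucc
      rw [Fin.succ_castSucc] at h
      simpa [Fin.init] using h⟩,
    ⟨a.1 (Fin.last (g+1)), by
      have h := a.2 (Fin.last g)
      rw [Fin.succ_last] at h
      simpa [Fin.init] using h⟩⟩
  invFun b := ⟨Fin.snoc b.1.1 b.2.1, fun i => by
      refine Fin.lastCases ?_ (fun j => ?_) i
      · rw [Fin.succ_last, Fin.snoc_last, Fin.snoc_castSucc]
        exact b.2.2
      · rw [Fin.succ_castSucc, Fin.snoc_castSucc, Fin.snoc_castSucc]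
        exact b.1.2 j⟩
  left_inv a := by
    ext v
    simp [Fin.snoc_init_self]
  right_inv := by
    rintro ⟨⟨bb, hb⟩, ⟨x, hx⟩⟩
    have h1 : Fin.init (Fin.snoc bb x : Fin (g+2) → Fin l) = bb := Fin.init_snoc ..
    refine Sigma.ext (Subtype.ext h1) ?_
    dsimp only
    rw [Subtype.heq_iff_coe_eq]
    · simp
    · intro y
      rw [h1]

lemma card_ne (c : Fin l) : Fintype.card {x : Fin l // x ≠ c} = l - 1 := by
  have h : Fintype.card {x : Fin l // ¬ x = c} = l - 1 := by
    rw [Fintype.card_subtype_compl, Fintype.card_subtype_eq, Fintype.card_fin]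
  exact h

lemma card_path (l : ℕ) : ∀ g : ℕ,
    Fintype.card {a : Fin (g+1) → Fin l // ∀ i : Fin g, a i.succ ≠ a i.castSucc}
      = l * (l-1)^g
  | 0 => by
    rw [Fintype.card_congr (Equiv.subtypeUnivEquiv (fun a i => i.elim0))]
    simp
  | (g+1) => by
    rw [Fintype.card_congr (pathEquiv l g), Fintype.card_sigma]
    simp only [card_ne]
    rw [Finset.sum_const, smul_eq_mul, Finset.card_univ, card_path l g]
    rw [pow_succ, mul_assoc]

/-- Cutting equiv: closed proper paths of length `g+1` vs proper paths of length `g`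
with distinct endpoints. -/
def cutEquiv (l g : ℕ) :
    {a : Fin (g+2) → Fin l // (∀ i : Fin (g+1), a i.succ ≠ a i.castSucc)
        ∧ a (Fin.last (g+1)) = a 0} ≃
    {a : Fin (g+1) → Fin l // (∀ i : Fin g, a i.succ ≠ a i.castSucc)
        ∧ a (Fin.last g) ≠ a 0} where
  toFun a := ⟨Fin.init a.1, ⟨fun j => by
      have h := a.2.1 j.castSucc
      rw [Fin.succ_castSucc] at h
      simpa [Fin.init] using h,
    by
      have h := a.2.1 (Fin.last g)
      rw [Fin.succ_last, a.2.2] at h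
      simpa [Fin.init] using h.symm⟩⟩
  invFun b := ⟨Fin.snoc b.1 (b.1 0), ⟨fun i => by
      refine Fin.lastCases ?_ (fun j => ?_) i
      · rw [Fin.succ_last, Fin.snoc_last, Fin.snoc_castSucc]
        exact b.2.2.symm
      · rw [Fin.succ_castSucc, Fin.snoc_castSucc, Fin.snoc_castSucc]
        exact b.2.1 j,
    by rw [Fin.snoc_last, ← Fin.castSucc_zero (n := g+1), Fin.snoc_castSucc]⟩⟩
  left_inv a := by
    refine Subtype.ext (funext fun v => ?_)
    refine Fin.lastCases ?_ (fun j => ?_) v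
    · show Fin.snoc (Fin.init a.1) (Fin.init a.1 0) (Fin.last (g+1)) = _
      rw [Fin.snoc_last, a.2.2]
      show a.1 (Fin.castSucc 0) = _
      rw [Fin.castSucc_zero]
    · show Fin.snoc (Fin.init a.1) (Fin.init a.1 0) j.castSucc = _
      rw [Fin.snoc_castSucc]
      rfl
  right_inv b := by
    refine Subtype.ext (funext fun v => ?_)
    dsimp only
    rw [Fin.init_snoc]

/-- the number of proper paths of length `g` with distinct endpoints. -/
def fcard (l g : ℕ) : ℕ :=
  Fintype.card {a : Fin (g+1) → Fin l // (∀ i : Fin g, a i.succ ≠ a i.castSucc)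
    ∧ a (Fin.last g) ≠ a 0}

lemma fcard_zero (l : ℕ) : fcard l 0 = 0 := by
  refine Fintype.card_eq_zero_iff.mpr ⟨fun a => a.2.2 (congrArg a.1 (by ext; simp))⟩

lemma e_add_f (l g : ℕ) :
    Fintype.card {a : Fin (g+1) → Fin l // (∀ i : Fin g, a i.succ ≠ a i.castSucc)
      ∧ a (Fin.last g) = a 0} + fcard l g = l * (l-1)^g := by
  classical
  have h1 := Fintype.card_congr
    (Equiv.subtypeSubtypeEquivSubtypeInter
      (fun a : Fin (g+1) → Fin l => ∀ i : Fin g, a i.succ ≠ a i.castSucc)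
      (fun a => a (Fin.last g) = a 0))
  have h2 := Fintype.card_congr
    (Equiv.subtypeSubtypeEquivSubtypeInter
      (fun a : Fin (g+1) → Fin l => ∀ i : Fin g, a i.succ ≠ a i.castSucc)
      (fun a => ¬ a (Fin.last g) = a 0))
  have h3 : Fintype.card {b : {a : Fin (g+1) → Fin l //
        ∀ i : Fin g, a i.succ ≠ a i.castSucc} // ¬ b.1 (Fin.last g) = b.1 0}
      = Fintype.card {a : Fin (g+1) → Fin l // ∀ i : Fin g, a i.succ ≠ a i.castSucc}
        - Fintype.card {b : {a : Fin (g+1) → Fin l //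
            ∀ i : Fin g, a i.succ ≠ a i.castSucc} // b.1 (Fin.last g) = b.1 0} :=
    Fintype.card_subtype_compl _
  have h4 : Fintype.card {b : {a : Fin (g+1) → Fin l //
        ∀ i : Fin g, a i.succ ≠ a i.castSucc} // b.1 (Fin.last g) = b.1 0}
      ≤ Fintype.card {a : Fin (g+1) → Fin l // ∀ i : Fin g, a i.succ ≠ a i.castSucc} :=
    Fintype.card_subtype_le _
  have h5 : fcard l g = Fintype.card {a : Fin (g+1) → Fin l //
      (∀ i : Fin g, a i.succ ≠ a i.castSucc) ∧ ¬ a (Fin.last g) = a 0} :=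
    Fintype.card_congr (Equiv.refl _)
  have h6 := card_path l g
  rw [← h1, h5, ← h2, h3, h6]
  rw [h6] at h4
  exact Nat.add_sub_cancel' h4

lemma e_succ (l g : ℕ) :
    Fintype.card {a : Fin (g+2) → Fin l // (∀ i : Fin (g+1), a i.succ ≠ a i.castSucc)
      ∧ a (Fin.last (g+1)) = a 0} = fcard l g :=
  Fintype.card_congr (cutEquiv l g)

lemma fcard_rec (l g : ℕ) : fcard l (g+1) + fcard l g = l * (l-1)^(g+1) := by
  have := e_add_f l (g+1)
  rw [e_succ l g] at this
  omega

lemma cast_mul_pow (l j : ℕ) : ((l * (l-1)^j : ℕ) : ℚ) = (l:ℚ) * ((l:ℚ)-1)^j := by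
  cases l with
  | zero => simp
  | succ s =>
    push_cast
    ring

lemma fcard_q (l : ℕ) : ∀ g : ℕ,
    (fcard l g : ℚ) = ((l:ℚ)-1)^(g+1) + (-1)^(g+1) * ((l:ℚ)-1)
  | 0 => by rw [fcard_zero]; push_cast; ring
  | (g+1) => by
    have h := fcard_rec l g
    have h2 : (fcard l (g+1) : ℚ) + (fcard l g : ℚ) = ((l * (l-1)^(g+1) : ℕ) : ℚ) := by
      exact_mod_cast congrArg (Nat.cast : ℕ → ℚ) h
    rw [cast_mul_pow] at h2
    have h3 := fcard_q l g
    have : (fcard l (g+1) : ℚ) = (l:ℚ) * ((l:ℚ)-1)^(g+1) - (fcard l g : ℚ) := by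
      linarith
    rw [this, h3]
    ring


/-- Proper colorings of the cycle `ZMod (g+1)` vs proper paths with distinct endpoints. -/
def cycEquiv (l g : ℕ) :
    {F : ZMod (g+1) → Fin l // ∀ x : ZMod (g+1), F x ≠ F (x+1)} ≃
    {a : Fin (g+1) → Fin l // (∀ i : Fin g, a i.succ ≠ a i.castSucc)
        ∧ a (Fin.last g) ≠ a 0} where
  toFun F := ⟨fun i => F.1 ((i.val : ℕ) : ZMod (g+1)), by
    constructor
    · intro i
      dsimp only
      rw [Fin.val_succ, Fin.coe_castSucc, Nat.cast_add, Nat.cast_one]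
      exact (F.2 ((i.val : ℕ) : ZMod (g+1))).symm
    · dsimp only
      rw [Fin.val_last, Fin.val_zero, Nat.cast_zero]
      have h := F.2 ((g : ℕ) : ZMod (g+1))
      rw [show ((g : ℕ) : ZMod (g+1)) + 1 = 0 by
        rw [← Nat.cast_succ, ZMod.natCast_self]] at h
      exact h⟩
  invFun a := ⟨fun x => a.1 ⟨x.val, ZMod.val_lt x⟩, by
    intro x
    dsimp only
    by_cases h : x.val < g
    · have h1 : (x + 1).val = x.val + 1 := by
        rw [show x + 1 = ((x.val + 1 : ℕ) : ZMod (g+1)) by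
          rw [Nat.cast_add, Nat.cast_one, ZMod.natCast_rightInverse x]]
        rw [ZMod.val_natCast, Nat.mod_eq_of_lt (by omega)]
      have e2 : (⟨(x + 1).val, ZMod.val_lt _⟩ : Fin (g+1)) = (⟨x.val, h⟩ : Fin g).succ :=
        Fin.ext (by simp [h1])
      have e3 : (⟨x.val, ZMod.val_lt _⟩ : Fin (g+1)) = (⟨x.val, h⟩ : Fin g).castSucc :=
        Fin.ext (by simp)
      rw [e2, e3]
      exact (a.2.1 ⟨x.val, h⟩).symm
    · have hx : x.val = g := by have := ZMod.val_lt x; omega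
      have h1 : (x + 1).val = 0 := by
        rw [show x + 1 = ((x.val + 1 : ℕ) : ZMod (g+1)) by
          rw [Nat.cast_add, Nat.cast_one, ZMod.natCast_rightInverse x]]
        rw [ZMod.val_natCast, hx, Nat.mod_self]
      have e2 : (⟨(x + 1).val, ZMod.val_lt _⟩ : Fin (g+1)) = 0 := Fin.ext (by simp [h1])
      have e3 : (⟨x.val, ZMod.val_lt _⟩ : Fin (g+1)) = Fin.last g := Fin.ext (by simp [hx])
      rw [e2, e3]
      exact a.2.2⟩
  left_inv F := by
    refine Subtype.ext (funext fun x => ?_)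
    dsimp only
    rw [ZMod.natCast_rightInverse x]
  right_inv a := by
    refine Subtype.ext (funext fun i => ?_)
    dsimp only
    have e : (⟨((i.val : ℕ) : ZMod (g+1)).val, ZMod.val_lt _⟩ : Fin (g+1)) = i :=
      Fin.ext (by
        show ((i.val : ℕ) : ZMod (g+1)).val = i.val
        rw [ZMod.val_natCast, Nat.mod_eq_of_lt i.isLt])
    exact congrArg _ e

/-- The number of proper `l`-colorings of the cycle on `k ≥ 1` vertices. -/
lemma card_cycle_q (l k : ℕ) (hk : k ≠ 0) :
    (Nat.card {F : ZMod k → Fin l // ∀ x : ZMod k, F x ≠ F (x+1)} : ℚ)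
      = ((l:ℚ)-1)^k + (-1)^k * ((l:ℚ)-1) := by
  obtain ⟨g, rfl⟩ : ∃ g, k = g + 1 := ⟨k - 1, by omega⟩
  rw [Nat.card_eq_fintype_card, Fintype.card_congr (cycEquiv l g)]
  exact fcard_q l g


section Action

variable {n l : ℕ}

/-- proper colorings of the cycle. -/
abbrev Col (n l : ℕ) := {f : ZMod n → Fin l // ∀ x : ZMod n, f x ≠ f (x + 1)}

/-- The dihedral action on colorings. -/
def dSMul : DihedralGroup n → Col n l → Col n l
  | .r m, f => ⟨fun v => f.1 (v + m), fun x => by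
      have h := f.2 (x + m)
      rw [show x + m + 1 = x + 1 + m by ring] at h
      exact h⟩
  | .sr m, f => ⟨fun v => f.1 (m - v), fun x => by
      dsimp only
      have h := f.2 (m - x - 1)
      rw [show m - x - 1 + 1 = m - x by ring] at h
      rw [show m - (x + 1) = m - x - 1 by ring]
      exact h.symm⟩

instance : SMul (DihedralGroup n) (Col n l) := ⟨dSMul⟩

lemma r_smul (m : ZMod n) (f : Col n l) (v : ZMod n) :
    ((DihedralGroup.r m) • f).1 v = f.1 (v + m) := rfl

lemma sr_smul (m : ZMod n) (f : Col n l) (v : ZMod n) :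
    ((DihedralGroup.sr m) • f).1 v = f.1 (m - v) := rfl

instance : MulAction (DihedralGroup n) (Col n l) where
  one_smul f := by
    refine Subtype.ext (funext fun v => ?_)
    show f.1 (v + 0) = f.1 v
    rw [add_zero]
  mul_smul a b f := by
    rcases a with i | i <;> rcases b with j | j <;>
      refine Subtype.ext (funext fun v => ?_)
    · rw [DihedralGroup.r_mul_r, r_smul, r_smul, r_smul]
      congr 1; ring
    · rw [DihedralGroup.r_mul_sr, sr_smul, r_smul, sr_smul]
      congr 1; ring
    · rw [DihedralGroup.sr_mul_r, sr_smul, sr_smul, r_smul]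
      congr 1; ring
    · rw [DihedralGroup.sr_mul_sr, r_smul, sr_smul, sr_smul]
      congr 1; ring

/-- No proper coloring of an odd cycle is fixed by a reflection. -/
lemma not_fixed_sr [NeZero n] (hodd : Odd n) (m : ZMod n) (f : Col n l) :
    ¬ (DihedralGroup.sr m) • f = f := by
  intro hf
  have h : ∀ v : ZMod n, f.1 (m - v) = f.1 v := fun v =>
    congrFun (congrArg Subtype.val hf) v
  have hu : IsUnit (2 : ZMod n) := by
    have := (ZMod.isUnit_iff_coprime 2 n).mpr hodd.coprime_two_left
    simpa using this
  set v := (2 : ZMod n)⁻¹ * (m - 1) with hv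
  have h2 : (2 : ZMod n) * v = m - 1 := by
    rw [hv, ← mul_assoc, ZMod.mul_inv_of_unit _ hu, one_mul]
  have hmv : m - v = v + 1 := by linear_combination -h2
  have := h v
  rw [hmv] at this
  exact f.2 v this.symm

/-- Periodicity under `m` is equivalent to periodicity under `gcd m.val n`. -/
lemma periodic_iff_gcd [NeZero n] (m : ZMod n) (f : ZMod n → Fin l) :
    (∀ v, f (v + m) = f v) ↔
      (∀ v, f (v + ((Nat.gcd m.val n : ℕ) : ZMod n)) = f v) := by
  let K : AddSubgroup (ZMod n) :=
    { carrier := {x | ∀ v, f (v + x) = f v}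
      zero_mem' := fun v => by rw [add_zero]
      add_mem' := fun {a b} ha hb v => by
        rw [← add_assoc, hb (v + a), ha v]
      neg_mem' := fun {a} ha v => by
        have h := ha (v + -a)
        rw [add_assoc, neg_add_cancel, add_zero] at h
        exact h.symm }
  have hiff : ∀ x : ZMod n, (x ∈ K) = (∀ v, f (v + x) = f v) := fun x => rfl
  rw [← hiff, ← hiff]
  constructor
  · intro hm
    have hb := Nat.gcd_eq_gcd_ab m.val n
    have hcast : ((Nat.gcd m.val n : ℕ) : ZMod n)
        = ((Nat.gcdA m.val n : ℤ) : ZMod n) * m := by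
      have h2 := congrArg (fun z : ℤ => ((z : ℤ) : ZMod n)) hb
      push_cast at h2
      rw [ZMod.natCast_self, ZMod.natCast_rightInverse m] at h2
      rw [h2]; ring
    rw [hcast, ← zsmul_eq_mul]
    exact zsmul_mem hm _
  · intro hg
    obtain ⟨c, hc⟩ : Nat.gcd m.val n ∣ m.val := Nat.gcd_dvd_left _ _
    have hm : m = (c : ZMod n) * ((Nat.gcd m.val n : ℕ) : ZMod n) := by
      have h1 : ((m.val : ℕ) : ZMod n) = m := ZMod.natCast_rightInverse m
      conv_lhs => rw [← h1, hc]
      push_cast; ring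
    rw [hm, ← nsmul_eq_mul]
    exact nsmul_mem hg _

/-- Counting colorings fixed by the rotation `r m`. -/
lemma card_fix_r [NeZero n] (m : ZMod n) :
    Nat.card (MulAction.fixedBy (Col n l) (DihedralGroup.r m))
      = Nat.card {F : ZMod (Nat.gcd m.val n) → Fin l //
          ∀ x, F x ≠ F (x + 1)} := by
  set d := Nat.gcd m.val n with hdd
  have hd : d ∣ n := Nat.gcd_dvd_right _ _
  haveI : NeZero d := ⟨fun h => (NeZero.ne n) (Nat.eq_zero_of_gcd_eq_zero_right h)⟩
  have hfix : ∀ f : Col n l, (DihedralGroup.r m) • f = f ↔ ∀ v, f.1 (v + m) = f.1 v := by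
    intro f
    constructor
    · intro hf v; exact congrFun (congrArg Subtype.val hf) v
    · intro hf; exact Subtype.ext (funext hf)
  have hsurj : Function.Surjective (ZMod.castHom hd (ZMod d)) := by
    intro y
    refine ⟨((y.val : ℕ) : ZMod n), ?_⟩
    rw [map_natCast, ZMod.natCast_rightInverse y]
  have hcd : (ZMod.castHom hd (ZMod d)) (((d : ℕ) : ZMod n)) = 0 := by
    rw [map_natCast, ZMod.natCast_self]
  -- the bijection
  set Φ : {F : ZMod d → Fin l // ∀ x, F x ≠ F (x + 1)} →
      MulAction.fixedBy (Col n l) (DihedralGroup.r m) := fun F =>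
    ⟨⟨fun v => F.1 (ZMod.castHom hd (ZMod d) v), fun x => by
        have := F.2 (ZMod.castHom hd (ZMod d) x)
        rwa [show (ZMod.castHom hd (ZMod d)) x + 1
          = (ZMod.castHom hd (ZMod d)) (x + 1) by rw [map_add, map_one]] at this⟩, by
      show (DihedralGroup.r m) • _ = _
      rw [hfix]
      rw [periodic_iff_gcd m]
      intro v
      dsimp only
      rw [map_add, ← hdd, hcd, add_zero]⟩ with hPhi
  symm
  apply Nat.card_eq_of_bijective Φ
  constructor
  · intro F F' hFF
    refine Subtype.ext (funext fun y => ?_)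
    obtain ⟨v, rfl⟩ := hsurj y
    have := congrFun (congrArg (fun z => (Subtype.val (Subtype.val z)))
      hFF) v
    exact this
  · rintro ⟨f, hf⟩
    rw [MulAction.mem_fixedBy, hfix, periodic_iff_gcd m, ← hdd] at hf
    -- f is d-periodic
    have hper : ∀ (k : ℕ) (w : ZMod n), f.1 (w + ((k * d : ℕ) : ZMod n)) = f.1 w := by
      intro k
      induction k with
      | zero => intro w; simp
      | succ k ih =>
        intro w
        have : ((((k+1) * d : ℕ)) : ZMod n) = ((k * d : ℕ) : ZMod n) + ((d : ℕ) : ZMod n) := by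
          push_cast; ring
        rw [this, ← add_assoc, hf (w + ((k * d : ℕ) : ZMod n)), ih w]
    have key : ∀ v : ZMod n,
        f.1 (((((ZMod.castHom hd (ZMod d)) v).val : ℕ) : ZMod n)) = f.1 v := by
      intro v
      have h1 : (ZMod.castHom hd (ZMod d)) v = ((v.val : ℕ) : ZMod d) := by
        conv_lhs => rw [← ZMod.natCast_rightInverse v]
        rw [map_natCast]
      have h2 : ((ZMod.castHom hd (ZMod d)) v).val = v.val % d := by
        rw [h1, ZMod.val_natCast]
      rw [h2]
      have hsplit : ((v.val : ℕ) : ZMod n)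
          = ((v.val % d : ℕ) : ZMod n) + (((v.val / d) * d : ℕ) : ZMod n) := by
        rw [← Nat.cast_add, Nat.mod_add_div']
      have h3 : f.1 ((v.val : ℕ) : ZMod n) = f.1 ((v.val % d : ℕ) : ZMod n) := by
        rw [hsplit, hper (v.val / d) _]
      rw [← h3, ZMod.natCast_rightInverse v]
    refine ⟨⟨fun y => f.1 ((y.val : ℕ) : ZMod n), fun y => ?_⟩, ?_⟩
    · obtain ⟨v, rfl⟩ := hsurj y
      dsimp only
      have e1 := key v
      have e2 : (ZMod.castHom hd (ZMod d)) v + 1 = (ZMod.castHom hd (ZMod d)) (v + 1) := by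
        rw [map_add, map_one]
      rw [e1, e2, key (v + 1)]
      exact f.2 v
    · rw [hPhi]
      refine Subtype.ext (Subtype.ext (funext fun v => ?_))
      exact key v

end Action

/-- Sum decomposition of the dihedral group. -/
def dihedralEquiv (n : ℕ) : (ZMod n ⊕ ZMod n) ≃ DihedralGroup n where
  toFun := Sum.elim DihedralGroup.r DihedralGroup.sr
  invFun a := match a with
    | .r i => Sum.inl i
    | .sr i => Sum.inr i
  left_inv := by rintro (i | i) <;> rfl
  right_inv := by rintro (i | i) <;> rfl

lemma regroup (n : ℕ) (hn : n ≠ 0) (C : ℕ → ℚ) :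
    ∑ j ∈ Finset.range n, C (Nat.gcd n j)
      = ∑ d ∈ n.divisors, (Nat.totient (n/d) : ℚ) * C d := by
  rw [← Finset.sum_fiberwise_of_maps_to' (g := fun j => Nat.gcd n j) (t := n.divisors)
    (fun j _ => Nat.mem_divisors.mpr ⟨Nat.gcd_dvd_left _ _, hn⟩) C]
  refine Finset.sum_congr rfl fun d hd => ?_
  rw [Finset.sum_const, nsmul_eq_mul]
  congr 1
  have h := Nat.totient_div_of_dvd (Nat.mem_divisors.mp hd).1
  exact_mod_cast (congrArg (Nat.cast : ℕ → ℚ) h).symm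

lemma totient_sum_q (n : ℕ) : (∑ d ∈ n.divisors, (Nat.totient (n/d) : ℚ)) = n := by
  have h1 : ∑ d ∈ n.divisors, Nat.totient (n/d) = n := by
    rw [Nat.sum_div_divisors]
    exact Nat.sum_totient n
  exact_mod_cast congrArg (Nat.cast : ℕ → ℚ) h1

end Orbital10

theorem orbital_stmt10 (n l : ℕ) (hn : 3 ≤ n) (hodd : Odd n) :
    (Nat.card (Quot (fun f g : {f : ZMod n → Fin l // ∀ x : ZMod n, f x ≠ f (x + 1)} =>
        ∃ m : ZMod n, (∀ v : ZMod n, g.1 v = f.1 (v + m)) ∨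
          (∀ v : ZMod n, g.1 v = f.1 (m - v)))) : ℚ) =
      (1 / (2 * (n : ℚ))) * ∑ d ∈ n.divisors, (Nat.totient (n / d) : ℚ) * ((l : ℚ) - 1) ^ d
        - (l : ℚ) / 2 + 1 / 2 := by
  classical
  haveI : NeZero n := ⟨by omega⟩
  set G := DihedralGroup n
  set L : ℚ := (l : ℚ) with hL
  -- identify the quotient with the orbit quotient
  have hrel : ∀ f g : Orbital10.Col n l,
      (∃ m : ZMod n, (∀ v : ZMod n, g.1 v = f.1 (v + m)) ∨
          (∀ v : ZMod n, g.1 v = f.1 (m - v))) ↔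
        (MulAction.orbitRel G (Orbital10.Col n l)).r f g := by
    intro f g
    have h2 : (MulAction.orbitRel G (Orbital10.Col n l)).r f g
        ↔ g ∈ MulAction.orbit G f :=
      Iff.trans Iff.rfl MulAction.mem_orbit_symm
    rw [h2]
    constructor
    · rintro ⟨m, h | h⟩
      · exact ⟨DihedralGroup.r m, Subtype.ext (funext fun v => (h v).symm)⟩
      · exact ⟨DihedralGroup.sr m, Subtype.ext (funext fun v => (h v).symm)⟩
    · rintro ⟨a, rfl⟩
      rcases a with m | m
      · exact ⟨m, Or.inl fun v => rfl⟩
      · exact ⟨m, Or.inr fun v => rfl⟩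
  have hquot : Nat.card (Quot (fun f g : Orbital10.Col n l =>
      ∃ m : ZMod n, (∀ v : ZMod n, g.1 v = f.1 (v + m)) ∨
        (∀ v : ZMod n, g.1 v = f.1 (m - v))))
      = Nat.card (MulAction.orbitRel.Quotient G (Orbital10.Col n l)) :=
    Nat.card_congr (Quot.congrRight hrel)
  -- Burnside
  haveI : ∀ a : G, Fintype (MulAction.fixedBy (Orbital10.Col n l) a) :=
    fun a => Fintype.ofFinite _
  haveI : Fintype (MulAction.orbitRel.Quotient G (Orbital10.Col n l)) :=
    Fintype.ofFinite _
  have hB := MulAction.sum_card_fixedBy_eq_card_orbits_mul_card_group G (Orbital10.Col n l)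
  -- evaluate the sum over the group
  have hsum : ∑ a : G, Fintype.card (MulAction.fixedBy (Orbital10.Col n l) a)
      = ∑ i : ZMod n,
          Fintype.card (MulAction.fixedBy (Orbital10.Col n l) (DihedralGroup.r i)) := by
    rw [← Equiv.sum_comp (Orbital10.dihedralEquiv n)
      (fun a => Fintype.card (MulAction.fixedBy (Orbital10.Col n l) a)),
      Fintype.sum_sum_type]
    have hzero : ∀ i : ZMod n,
        Fintype.card (MulAction.fixedBy (Orbital10.Col n l) (DihedralGroup.sr i)) = 0 := by
      intro i
      rw [Fintype.card_eq_zero_iff]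
      exact ⟨fun ⟨f, hf⟩ => Orbital10.not_fixed_sr hodd i f hf⟩
    simp only [Orbital10.dihedralEquiv, Equiv.coe_fn_mk, Sum.elim_inl, Sum.elim_inr, hzero,
      Finset.sum_const_zero, add_zero]
    convert add_zero _ using 2
    · exact Finset.sum_eq_zero fun i _ => (Fintype.card_congr (Equiv.refl _)).trans (hzero i)
    · exact Fintype.card_congr (Equiv.refl _)
  -- the fixed points of a rotation, rationally
  have hfixq : ∀ i : ZMod n,
      (Fintype.card (MulAction.fixedBy (Orbital10.Col n l) (DihedralGroup.r i)) : ℚ)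
        = (L-1)^(Nat.gcd n i.val) - (L-1) := by
    intro i
    rw [← Nat.card_eq_fintype_card, Orbital10.card_fix_r i, Nat.gcd_comm i.val n]
    have hd0 : Nat.gcd n i.val ≠ 0 :=
      fun h => NeZero.ne n (Nat.eq_zero_of_gcd_eq_zero_left h)
    have hddvd : Nat.gcd n i.val ∣ n := Nat.gcd_dvd_left _ _
    have hoddd : Odd (Nat.gcd n i.val) := by
      rcases Nat.even_or_odd (Nat.gcd n i.val) with he | ho
      · exfalso
        have h2 : (2 : ℕ) ∣ n := dvd_trans he.two_dvd hddvd
        rw [Nat.odd_iff] at hodd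
        omega
      · exact ho
    rw [Orbital10.card_cycle_q l _ hd0, hoddd.neg_one_pow]
    ring
  -- put the rotation sum in the desired form
  have hrotsum : (∑ i : ZMod n,
      ((Fintype.card (MulAction.fixedBy (Orbital10.Col n l) (DihedralGroup.r i)) : ℚ)))
      = ∑ j ∈ Finset.range n, ((L-1)^(Nat.gcd n j) - (L-1)) := by
    rw [Finset.sum_congr rfl (fun i _ => hfixq i)]
    refine Finset.sum_bij' (fun (a : ZMod n) _ => a.val) (fun (j : ℕ) _ => (j : ZMod n))
      ?_ ?_ ?_ ?_ ?_
    · intro a _; exact Finset.mem_range.mpr (ZMod.val_lt a)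
    · intro j _; exact Finset.mem_univ _
    · intro a _; exact ZMod.natCast_rightInverse a
    · intro j hj; exact ZMod.val_cast_of_lt (Finset.mem_range.mp hj)
    · intro a _; rfl
  have hregroup := Orbital10.regroup n (by omega) (fun d => (L-1)^d - (L-1))
  have htot := Orbital10.totient_sum_q n
  -- cast Burnside to ℚ
  have hcardG : Fintype.card G = 2 * n := DihedralGroup.card
  have hBq : (Fintype.card (MulAction.orbitRel.Quotient G (Orbital10.Col n l)) : ℚ)
      * (2 * (n:ℚ))
      = (∑ d ∈ n.divisors, (Nat.totient (n / d) : ℚ) * (L - 1) ^ d) - (L - 1) * n := by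
    have h1 : ((∑ a : G, Fintype.card (MulAction.fixedBy (Orbital10.Col n l) a) : ℕ) : ℚ)
        = (Fintype.card (MulAction.orbitRel.Quotient G (Orbital10.Col n l)) : ℚ)
          * (2 * (n:ℚ)) := by
      rw [hB, hcardG]; push_cast; ring
    rw [← h1]
    push_cast [hsum]
    rw [hrotsum, hregroup]
    have hsplit : ∑ d ∈ n.divisors, (Nat.totient (n/d) : ℚ) * ((L-1)^d - (L-1))
        = (∑ d ∈ n.divisors, (Nat.totient (n/d) : ℚ) * (L-1)^d)
          - (∑ d ∈ n.divisors, (Nat.totient (n/d) : ℚ)) * (L-1) := by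
      calc ∑ d ∈ n.divisors, (Nat.totient (n/d) : ℚ) * ((L-1)^d - (L-1))
          = ∑ d ∈ n.divisors,
            ((Nat.totient (n/d) : ℚ) * (L-1)^d - (Nat.totient (n/d) : ℚ) * (L-1)) :=
            Finset.sum_congr rfl fun d _ => by ring
        _ = (∑ d ∈ n.divisors, (Nat.totient (n/d) : ℚ) * (L-1)^d)
            - ∑ d ∈ n.divisors, (Nat.totient (n/d) : ℚ) * (L-1) := Finset.sum_sub_distrib ..
        _ = _ := by rw [Finset.sum_mul]
    rw [hsplit, htot]
    ring
  have hn0 : (2 * (n:ℚ)) ≠ 0 := by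
    have : (n:ℚ) ≠ 0 := Nat.cast_ne_zero.mpr (by omega)
    positivity
  have hval : (Fintype.card (MulAction.orbitRel.Quotient G (Orbital10.Col n l)) : ℚ)
      = ((∑ d ∈ n.divisors, (Nat.totient (n / d) : ℚ) * (L - 1) ^ d) - (L - 1) * n)
        / (2 * (n:ℚ)) := by
    rw [eq_div_iff hn0]; exact hBq
  rw [hquot, Nat.card_eq_fintype_card, hval]
  have hnq : (n:ℚ) ≠ 0 := Nat.cast_ne_zero.mpr (by omega)
  field_simp
  ring
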